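/- For every real k > 0 there exists a constant C_k such that for all ξ₀ ≥ 3 and all τ ≥ ξ₀, setting Ω(s) := (100 ln s + 9 (s−ξ₀)^{11/10})^{1/2} for s ≥ ξ₀, one has ∫_{ξ₀}^{τ} e^{−(2/5)(τ−s)} Ω(s)^{−k} ds ≤ C_k Ω(τ)^{−k}. -/

import Mathlib

/-- The radius `Ω(τ) = √(100 ln τ + 9 (τ - ξ₀)^{11/10})` of equation (2.6) of the paper. -/
noncomputable def Omega (ξ₀ τ : ℝ) : ℝ :=
  Real.sqrt (100 * Real.log τ + 9 * (τ - ξ₀) ^ ((11 : ℝ) / 10))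

noncomputable def F (ξ₀ s : ℝ) : ℝ := 100 * Real.log s + 9 * (s - ξ₀) ^ ((11:ℝ)/10)

lemma Omega_eq (ξ₀ s : ℝ) : Omega ξ₀ s = Real.sqrt (F ξ₀ s) := rfl

lemma aux_log_one {s : ℝ} (hs : 3 ≤ s) : 1 ≤ Real.log s := by
  rw [Real.le_log_iff_exp_le (by linarith)]
  have := Real.exp_one_lt_d9
  linarith

lemma F_pos {ξ₀ s : ℝ} (hξ : 3 ≤ ξ₀) (hs : ξ₀ ≤ s) : 0 < F ξ₀ s := by
  have h1 : 1 ≤ Real.log s := aux_log_one (by linarith)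
  have h2 : 0 ≤ (s - ξ₀) ^ ((11:ℝ)/10) := Real.rpow_nonneg (by linarith) _
  unfold F; linarith

lemma aux_pow11 {x : ℝ} (hx : 0 ≤ x) : x ^ ((11:ℝ)/10) ≤ 1 + x^2 := by
  rcases le_total x 1 with h | h
  · have := Real.rpow_le_one hx h (by norm_num : (0:ℝ) ≤ 11/10)
    nlinarith [sq_nonneg x]
  · have h2 : x ^ ((11:ℝ)/10) ≤ x ^ ((2:ℝ)) :=
      Real.rpow_le_rpow_of_exponent_le h (by norm_num)
    rw [show ((2:ℝ)) = ((2:ℕ):ℝ) by norm_num, Real.rpow_natCast] at h2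
    linarith

lemma aux_split {u d : ℝ} (hu : 0 ≤ u) (hd : 0 ≤ d) :
    (u + d) ^ ((11:ℝ)/10) ≤ 4 * u ^ ((11:ℝ)/10) + 4 * d ^ ((11:ℝ)/10) := by
  have h4 : (2:ℝ) ^ ((11:ℝ)/10) ≤ 4 := by
    have := Real.rpow_le_rpow_of_exponent_le (x := 2) (by norm_num) (by norm_num : (11:ℝ)/10 ≤ 2)
    have h2 : (2:ℝ) ^ ((2:ℝ)) = 4 := by
      rw [show ((2:ℝ)) = ((2:ℕ):ℝ) by norm_num, Real.rpow_natCast]; norm_num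
    linarith [this.trans_eq h2]
  rcases le_total u d with h | h
  · have h1 : (u + d) ^ ((11:ℝ)/10) ≤ (2*d) ^ ((11:ℝ)/10) :=
      Real.rpow_le_rpow (by linarith) (by linarith) (by norm_num)
    rw [Real.mul_rpow (by norm_num) hd] at h1
    have hdp : 0 ≤ d ^ ((11:ℝ)/10) := Real.rpow_nonneg hd _
    have hup : 0 ≤ u ^ ((11:ℝ)/10) := Real.rpow_nonneg hu _
    nlinarith
  · have h1 : (u + d) ^ ((11:ℝ)/10) ≤ (2*u) ^ ((11:ℝ)/10) :=
      Real.rpow_le_rpow (by linarith) (by linarith) (by norm_num)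
    rw [Real.mul_rpow (by norm_num) hu] at h1
    have hdp : 0 ≤ d ^ ((11:ℝ)/10) := Real.rpow_nonneg hd _
    have hup : 0 ≤ u ^ ((11:ℝ)/10) := Real.rpow_nonneg hu _
    nlinarith

lemma aux_sq_le_exp {y : ℝ} (hy : 0 ≤ y) : y^2 ≤ 4 * Real.exp y := by
  have h1 : y/2 + 1 ≤ Real.exp (y/2) := Real.add_one_le_exp _
  have h2 : Real.exp (y/2) * Real.exp (y/2) = Real.exp y := by
    rw [← Real.exp_add]; ring_nf
  nlinarith [Real.exp_pos (y/2)]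

lemma aux_comb (T P U D L E d ε : ℝ)
    (hε : 0 < ε) (hd : 0 ≤ d) (hL : 1 ≤ L) (hE : 1 ≤ E) (hU : 0 ≤ U)
    (h1 : T ≤ L + d/3) (h2 : P ≤ 4*U + 4*D) (h3 : D ≤ 1 + d^2)
    (h4 : (ε*d)^2 ≤ 4*E) (h5 : ε*d ≤ E) :
    ε^2 * (100*T + 9*P) ≤ (4*ε^2 + 34*ε + 144) * E * (100*L + 9*U) := by
  have hEL : 1 ≤ E*L := one_le_mul_of_one_le_of_one_le hE hL
  nlinarith [mul_le_mul_of_nonneg_left h1 (mul_nonneg (sq_nonneg ε) (by norm_num : (0:ℝ) ≤ 100)),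
    mul_le_mul_of_nonneg_left h2 (mul_nonneg (sq_nonneg ε) (by norm_num : (0:ℝ) ≤ 9)),
    mul_le_mul_of_nonneg_left h3 (mul_nonneg (sq_nonneg ε) (by norm_num : (0:ℝ) ≤ 36)),
    mul_le_mul_of_nonneg_left h4 (by norm_num : (0:ℝ) ≤ 36),
    mul_le_mul_of_nonneg_left h5 (by positivity : (0:ℝ) ≤ 34*ε),
    mul_nonneg (mul_nonneg (sq_nonneg ε) (by linarith : (0:ℝ) ≤ L)) (sub_nonneg.2 hE),
    mul_nonneg (mul_nonneg hε.le (by linarith : (0:ℝ) ≤ E)) (sub_nonneg.2 hL),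
    mul_nonneg (mul_nonneg (sq_nonneg ε) hU) (sub_nonneg.2 hE),
    mul_nonneg (sq_nonneg ε) (sub_nonneg.2 hEL),
    mul_nonneg (by linarith : (0:ℝ) ≤ E) (sub_nonneg.2 hL),
    mul_nonneg (mul_nonneg (sq_nonneg ε) (by linarith : (0:ℝ) ≤ E)) (by linarith : (0:ℝ) ≤ L),
    mul_nonneg (mul_nonneg hε.le (by linarith : (0:ℝ) ≤ E)) (by linarith : (0:ℝ) ≤ L),
    mul_nonneg (by linarith : (0:ℝ) ≤ E) (by linarith : (0:ℝ) ≤ L),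
    mul_nonneg (mul_nonneg hε.le (by linarith : (0:ℝ) ≤ E)) hU,
    mul_nonneg (by linarith : (0:ℝ) ≤ E) hU,
    mul_nonneg (mul_nonneg (sq_nonneg ε) (by linarith : (0:ℝ) ≤ E)) hU,
    mul_nonneg (sq_nonneg ε) hd]

lemma growth {ε ξ₀ s τ : ℝ} (hε : 0 < ε) (hξ : 3 ≤ ξ₀) (hs : ξ₀ ≤ s) (hτ : s ≤ τ) :
    ε^2 * F ξ₀ τ ≤ (4*ε^2 + 34*ε + 144) * Real.exp (ε*(τ-s)) * F ξ₀ s := by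
  have hd : 0 ≤ τ - s := by linarith
  have hu : 0 ≤ s - ξ₀ := by linarith
  have hL : 1 ≤ Real.log s := aux_log_one (by linarith)
  have hE : 1 ≤ Real.exp (ε*(τ-s)) := Real.one_le_exp (by positivity)
  have hU : 0 ≤ (s - ξ₀) ^ ((11:ℝ)/10) := Real.rpow_nonneg hu _
  have h1 : Real.log τ ≤ Real.log s + (τ-s)/3 := by
    have hs0 : (0:ℝ) < s := by linarith
    have hτ0 : (0:ℝ) < τ := by linarith
    have := Real.log_le_sub_one_of_pos (x := τ/s) (by positivity)
    rw [Real.log_div (ne_of_gt hτ0) (ne_of_gt hs0)] at this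
    have h2 : τ/s - 1 = (τ-s)/s := by field_simp
    have h3 : (τ-s)/s ≤ (τ-s)/3 := by
      apply div_le_div_of_nonneg_left hd (by norm_num) (by linarith)
    linarith
  unfold F
  rw [show τ - ξ₀ = (s - ξ₀) + (τ - s) by ring]
  exact aux_comb _ _ _ _ _ _ _ _ hε hd hL hE hU h1
    (aux_split hu hd) (aux_pow11 hd) (aux_sq_le_exp (by positivity))
    (by linarith [Real.add_one_le_exp (ε*(τ-s))])

lemma Omega_rpow_neg {ξ₀ s : ℝ} (k : ℝ) (hξ : 3 ≤ ξ₀) (hs : ξ₀ ≤ s) :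
    Omega ξ₀ s ^ (-k) = ((F ξ₀ s) ^ (k/2))⁻¹ := by
  have hF := F_pos hξ hs
  rw [Omega_eq, Real.sqrt_eq_rpow, ← Real.rpow_mul hF.le,
    show (1/2)*(-k) = -(k/2) by ring, Real.rpow_neg hF.le]

lemma pointwise {k ξ₀ s τ : ℝ} (hk : 0 < k) (hξ : 3 ≤ ξ₀) (hs : ξ₀ ≤ s) (hτ : s ≤ τ) :
    Real.exp (-(2/5)*(τ-s)) * Omega ξ₀ s ^ (-k) ≤
      (((4*(2/(5*k))^2 + 34*(2/(5*k)) + 144)/(2/(5*k))^2) ^ (k/2) * Omega ξ₀ τ ^ (-k))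
        * Real.exp (-(1/5)*(τ-s)) := by
  set ε := 2/(5*k) with hε_def
  have hε : 0 < ε := by rw [hε_def]; positivity
  set A := 4*ε^2 + 34*ε + 144 with hA_def
  have hA : 0 < A := by rw [hA_def]; positivity
  have hFs := F_pos hξ hs
  have hFτ := F_pos hξ (hs.trans hτ)
  have hgrow : F ξ₀ τ ≤ (A/ε^2) * Real.exp (ε*(τ-s)) * F ξ₀ s := by
    have h := growth hε hξ hs hτ
    rw [← hA_def] at h
    rw [div_mul_eq_mul_div, div_mul_eq_mul_div, le_div_iff₀ (by positivity)]
    linarith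
  set a := (F ξ₀ s) ^ (k/2) with ha_def
  set b := (F ξ₀ τ) ^ (k/2) with hb_def
  have ha : 0 < a := Real.rpow_pos_of_pos hFs _
  have hb0 : 0 < b := Real.rpow_pos_of_pos hFτ _
  have hB : 0 < A/ε^2 := by positivity
  have hBk : 0 < (A/ε^2) ^ (k/2) := Real.rpow_pos_of_pos hB _
  have hb : b ≤ (A/ε^2) ^ (k/2) * Real.exp ((1/5)*(τ-s)) * a := by
    calc b ≤ ((A/ε^2) * Real.exp (ε*(τ-s)) * F ξ₀ s) ^ (k/2) :=
          Real.rpow_le_rpow hFτ.le hgrow (by positivity)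
      _ = (A/ε^2) ^ (k/2) * (Real.exp (ε*(τ-s))) ^ (k/2) * a := by
          rw [Real.mul_rpow (by positivity) hFs.le, Real.mul_rpow hB.le (Real.exp_nonneg _)]
      _ = (A/ε^2) ^ (k/2) * Real.exp ((1/5)*(τ-s)) * a := by
          rw [← Real.exp_mul]
          congr 2
          rw [hε_def]
          field_simp
  have key : Real.exp (-(2/5)*(τ-s)) * b ≤ ((A/ε^2) ^ (k/2) * Real.exp (-(1/5)*(τ-s))) * a := by
    have h := mul_le_mul_of_nonneg_left hb (Real.exp_nonneg (-(2/5)*(τ-s)))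
    have hexp : Real.exp (-(2/5)*(τ-s)) * Real.exp ((1/5)*(τ-s)) = Real.exp (-(1/5)*(τ-s)) := by
      rw [← Real.exp_add]; ring_nf
    calc Real.exp (-(2/5)*(τ-s)) * b
        ≤ Real.exp (-(2/5)*(τ-s)) * ((A/ε^2) ^ (k/2) * Real.exp ((1/5)*(τ-s)) * a) := h
      _ = ((A/ε^2) ^ (k/2) * a) * (Real.exp (-(2/5)*(τ-s)) * Real.exp ((1/5)*(τ-s))) := by ring
      _ = ((A/ε^2) ^ (k/2) * a) * Real.exp (-(1/5)*(τ-s)) := by rw [hexp]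
      _ = ((A/ε^2) ^ (k/2) * Real.exp (-(1/5)*(τ-s))) * a := by ring
  rw [Omega_rpow_neg k hξ hs, Omega_rpow_neg k hξ (hs.trans hτ), ← ha_def, ← hb_def]
  have h2 := mul_le_mul_of_nonneg_right key (by positivity : (0:ℝ) ≤ a⁻¹ * b⁻¹)
  have e1 : Real.exp (-(2/5)*(τ-s)) * b * (a⁻¹ * b⁻¹) = Real.exp (-(2/5)*(τ-s)) * a⁻¹ := by
    field_simp
  have e2 : ((A/ε^2) ^ (k/2) * Real.exp (-(1/5)*(τ-s))) * a * (a⁻¹ * b⁻¹)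
      = ((A/ε^2) ^ (k/2) * b⁻¹) * Real.exp (-(1/5)*(τ-s)) := by
    field_simp
  rw [e1, e2] at h2
  exact h2

lemma F_contOn (ξ₀ a b : ℝ) (h3 : 3 ≤ ξ₀) (ha : ξ₀ ≤ a) : ContinuousOn (F ξ₀) (Set.Icc a b) := by
  apply continuousOn_of_forall_continuousAt
  intro x hx
  have hx0 : x ≠ 0 := by have := hx.1; intro h; simp [h] at this ⊢; linarith
  have h1 : ContinuousAt (fun s => 100 * Real.log s) x :=
    (Real.continuousAt_log hx0).const_mul 100
  have h2 : ContinuousAt (fun s : ℝ => 9 * (s - ξ₀) ^ ((11:ℝ)/10)) x := by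
    exact (((continuousAt_id.sub continuousAt_const).rpow_const
      (Or.inr (by norm_num)))).const_mul 9
  exact h1.add h2

lemma exp_int (c a b : ℝ) (hab : a ≤ b) :
    (∫ s in a..b, Real.exp (-(1/5)*(c-s))) = 5 * Real.exp (-(1/5)*(c-b)) - 5 * Real.exp (-(1/5)*(c-a)) := by
  have hderiv : ∀ x ∈ Set.uIcc a b,
      HasDerivAt (fun s => 5 * Real.exp (-(1/5)*(c-s))) (Real.exp (-(1/5)*(c-x))) x := by
    intro x _
    have h1 : HasDerivAt (fun s : ℝ => c - s) (-1) x := (hasDerivAt_id x).const_sub c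
    have h2 : HasDerivAt (fun s : ℝ => -(1/5)*(c-s)) ((-(1/5))*(-1)) x := h1.const_mul _
    have h3 : HasDerivAt (fun s : ℝ => 5 * Real.exp (-(1/5)*(c-s)))
        (5 * (Real.exp (-(1/5)*(c-x)) * ((-(1/5))*(-1)))) x := (h2.exp).const_mul (5:ℝ)
    convert h3 using 1
    ring
  have hint : IntervalIntegrable (fun x => Real.exp (-(1/5)*(c-x))) MeasureTheory.volume a b := by
    apply Continuous.intervalIntegrable
    fun_prop
  rw [intervalIntegral.integral_eq_sub_of_hasDerivAt hderiv hint]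

/-- first estimate in (4.4).
For every `k > 0` there is `C_k` such that for all `ξ₀ ≥ 3` and `τ ≥ ξ₀`,
`∫_{ξ₀}^{τ} e^{-(2/5)(τ-s)} Ω(s)^{-k} ds ≤ C_k Ω(τ)^{-k}`. -/
theorem duhamel_Omega_decay (k : ℝ) (hk : 0 < k) :
    ∃ C : ℝ, ∀ ξ₀ : ℝ, 3 ≤ ξ₀ → ∀ τ : ℝ, ξ₀ ≤ τ →
      (∫ s in ξ₀..τ, Real.exp (-(2 / 5) * (τ - s)) * (Omega ξ₀ s) ^ (-k)) ≤
        C * (Omega ξ₀ τ) ^ (-k) := by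
  set ε := 2/(5*k) with hε_def
  have hε : 0 < ε := by rw [hε_def]; positivity
  set B := (4*ε^2 + 34*ε + 144)/ε^2 with hB_def
  have hB : 0 < B := by rw [hB_def]; positivity
  have hBk : 0 < B ^ (k/2) := Real.rpow_pos_of_pos hB _
  refine ⟨5 * B ^ (k/2), ?_⟩
  intro ξ₀ hξ τ hτ
  have hFτ := F_pos hξ hτ
  have hΩτ : 0 < Omega ξ₀ τ ^ (-k) := by
    rw [Omega_rpow_neg k hξ hτ]
    positivity
  set c := B ^ (k/2) * Omega ξ₀ τ ^ (-k) with hc_def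
  have hc : 0 < c := by positivity
  have hmono : (∫ s in ξ₀..τ, Real.exp (-(2/5) * (τ - s)) * (Omega ξ₀ s) ^ (-k)) ≤
      (∫ s in ξ₀..τ, c * Real.exp (-(1/5)*(τ-s))) := by
    apply intervalIntegral.integral_mono_on hτ
    · -- integrability of f
      apply ContinuousOn.intervalIntegrable
      rw [Set.uIcc_of_le hτ]
      apply ContinuousOn.mul
      · exact (Continuous.continuousOn (by fun_prop))
      · have hΩcont : ContinuousOn (fun s => Omega ξ₀ s) (Set.Icc ξ₀ τ) := by
          simp only [Omega_eq]
          exact Real.continuous_sqrt.comp_continuousOn (F_contOn ξ₀ ξ₀ τ hξ le_rfl)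
        apply hΩcont.rpow_const
        intro x hx
        left
        have : 0 < Omega ξ₀ x := by
          rw [Omega_eq, Real.sqrt_pos]
          exact F_pos hξ hx.1
        exact this.ne'
    · apply Continuous.intervalIntegrable
      fun_prop
    · intro x hx
      rw [hc_def]
      exact pointwise hk hξ hx.1 hx.2
  have hcalc : (∫ s in ξ₀..τ, c * Real.exp (-(1/5)*(τ-s))) ≤ 5 * c := by
    rw [intervalIntegral.integral_const_mul, exp_int τ ξ₀ τ hτ]
    have h1 : Real.exp (-(1/5)*(τ-τ)) = 1 := by norm_num
    have h2 : 0 < Real.exp (-(1/5)*(τ-ξ₀)) := Real.exp_pos _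
    rw [h1]
    nlinarith
  calc (∫ s in ξ₀..τ, Real.exp (-(2/5) * (τ - s)) * (Omega ξ₀ s) ^ (-k))
      ≤ (∫ s in ξ₀..τ, c * Real.exp (-(1/5)*(τ-s))) := hmono
    _ ≤ 5 * c := hcalc
    _ = 5 * B ^ (k/2) * Omega ξ₀ τ ^ (-k) := by rw [hc_def]; ring
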